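/- arXiv:2010.12490 — 3 statements merged into one kernel-verified Lean document; each statement's English description precedes it below -/
import Mathlib

section
/- For a group K with trivial center and an automorphism θ : K → K, the following are equivalent for the mapping torus Γ_θ = K ⋊_θ ℤ: (i) C(Γ_θ) ≠ 1; (ii) θᵐ is an inner automorphism of K for some nonzero integer m. -/
open SemidirectProduct

abbrev MappingTorus (K : Type*) [Group K] (θ : MulAut K) :=
  K ⋊[zpowersHom (MulAut K) θ] Multiplicative ℤ

/-- For K with trivial center: the center of Γ_θ = K ⋊_θ ℤ is nontrivial iff
θ^m is an inner automorphism of K for some nonzero integer m. -/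
theorem stmt6 {K : Type*} [Group K] (hK : Subgroup.center K = ⊥) (θ : MulAut K) :
    Subgroup.center (MappingTorus K θ) ≠ ⊥ ↔
      ∃ m : ℤ, m ≠ 0 ∧ ∃ β : K, ∀ α : K, (θ ^ m) α = β⁻¹ * α * β := by
  constructor
  · intro h
    obtain ⟨⟨⟨β, n⟩, hg⟩, hg1⟩ := Subgroup.ne_bot_iff_exists_ne_one.mp h
    have hcomm := Subgroup.mem_center_iff.mp hg
    have key : ∀ a : K, (θ ^ n.toAdd) a = β⁻¹ * a * β := by
      intro a
      have := congrArg SemidirectProduct.left (hcomm ⟨a, 1⟩)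
      simp [SemidirectProduct.mul_left] at this
      rw [mul_assoc, eq_inv_mul_iff_mul_eq]
      exact this.symm
    refine ⟨n.toAdd, ?_, β, key⟩
    intro hn0
    apply hg1
    have hβ : β ∈ Subgroup.center K := by
      rw [Subgroup.mem_center_iff]
      intro a
      have := key a
      rw [hn0] at this
      simp at this
      calc a * β = β * (β⁻¹ * a * β) := by group
        _ = β * a := by rw [← this]
    rw [hK, Subgroup.mem_bot] at hβ
    have hn1 : n = 1 := by
      have : n.toAdd = (1 : Multiplicative ℤ).toAdd := hn0
      exact Multiplicative.toAdd.injective this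
    have : (⟨β, n⟩ : MappingTorus K θ) = 1 := by
      ext
      · simp [hβ]
      · simp [hn1]
    exact Subtype.ext this
  · rintro ⟨m, hm, β, hβ⟩
    have hcom : θ ^ m * θ = θ * θ ^ m := ((Commute.refl θ).zpow_left m)
    have h1 : ∀ x : K, (θ β)⁻¹ * x * θ β = β⁻¹ * x * β := by
      intro x
      have e1 := hβ (θ⁻¹ x)
      have e2 := hβ x
      have e3 : (θ ^ m) x = θ ((θ ^ m) (θ⁻¹ x)) := by
        have := DFunLike.congr_fun hcom (θ⁻¹ x)
        simpa [MulAut.mul_apply] using this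
      rw [← e2, e3, e1]
      simp [map_mul]
    have hθβ : θ β = β := by
      have hc : θ β * β⁻¹ ∈ Subgroup.center K := by
        rw [Subgroup.mem_center_iff]
        intro a
        calc a * (θ β * β⁻¹) = θ β * ((θ β)⁻¹ * a * θ β) * β⁻¹ := by group
          _ = θ β * (β⁻¹ * a * β) * β⁻¹ := by rw [h1]
          _ = θ β * β⁻¹ * a := by group
      rw [hK, Subgroup.mem_bot] at hc
      exact mul_inv_eq_one.mp hc
    have hinv : θ⁻¹ β = β := by conv_lhs => rw [← hθβ, MulAut.inv_apply_self]
    have hθkβ : ∀ k : ℤ, (θ ^ k) β = β := by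
      intro k
      induction k using Int.induction_on with
      | zero => simp
      | succ i ih => rw [zpow_add_one, MulAut.mul_apply, hθβ, ih]
      | pred i ih => rw [zpow_sub_one, MulAut.mul_apply, hinv, ih]
    have hmem : (⟨β, Multiplicative.ofAdd m⟩ : MappingTorus K θ) ∈
        Subgroup.center (MappingTorus K θ) := by
      rw [Subgroup.mem_center_iff]
      rintro ⟨a, k⟩
      ext
      · simp only [SemidirectProduct.mul_left, zpowersHom_apply, toAdd_ofAdd]
        rw [hθkβ k.toAdd, hβ a]
        group
      · simp only [SemidirectProduct.mul_right]
        exact congrArg Multiplicative.toAdd (mul_comm _ _)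
    intro hbot
    rw [hbot, Subgroup.mem_bot] at hmem
    have := congrArg SemidirectProduct.right hmem
    simp at this
    exact hm (congrArg Multiplicative.toAdd this)
end

section
/- If K is a finitely generated, torsion-free, residually finite group and θ : K → K is an automorphism, then every endomorphism of Γ_θ = K ⋊_θ ℤ whose image has finite index in Γ_θ is injective. -/
open SemidirectProduct

/-- A monoid is torsion-free if no nontrivial element has finite order
(definition removed from Mathlib; restored here with its old meaning). -/
def Monoid.IsTorsionFree (G : Type*) [Monoid G] : Prop :=
  ∀ g : G, g ≠ 1 → ¬IsOfFinOrder g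

/-- G is residually finite if every nontrivial element survives in some finite quotient. -/
def ResiduallyFinite (G : Type*) [Group G] : Prop :=
  ∀ g : G, g ≠ 1 → ∃ (H : Type) (_ : Group H) (_ : Finite H) (f : G →* H), f g ≠ 1


namespace HirshonAux

variable {G : Type*} [Group G]

lemma finite_monoidHom (hfg : Group.FG G) (F : Type*) [Group F] [Finite F] :
    Finite (G →* F) := by
  obtain ⟨S, hS, hfin⟩ := Group.fg_iff.mp hfg
  haveI := hfin.to_subtype
  refine Finite.of_injective (fun f : G →* F => (fun s : S => f s)) ?_
  intro f g h
  ext x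
  have hx : x ∈ Subgroup.closure S := hS ▸ Subgroup.mem_top x
  induction hx using Subgroup.closure_induction with
  | mem y hy => exact congrFun h ⟨y, hy⟩
  | one => simp
  | mul y z _ _ ihy ihz => simp [map_mul, ihy, ihz]
  | inv y _ ihy => simp [map_inv, ihy]

def iter (φ : G →* G) : ℕ → G →* G
  | 0 => MonoidHom.id G
  | n+1 => φ.comp (iter φ n)

lemma iter_zero (φ : G →* G) : iter φ 0 = MonoidHom.id G := rfl

lemma iter_succ (φ : G →* G) (n : ℕ) : iter φ (n+1) = φ.comp (iter φ n) := rfl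

lemma iter_one (φ : G →* G) : iter φ 1 = φ := by
  rw [iter_succ, iter_zero, MonoidHom.comp_id]

lemma iter_add (φ : G →* G) (n m : ℕ) : iter φ (n + m) = (iter φ n).comp (iter φ m) := by
  induction n with
  | zero => rw [Nat.zero_add, iter_zero, MonoidHom.id_comp]
  | succ k ih =>
      have : k + 1 + m = (k + m) + 1 := by omega
      rw [this, iter_succ, ih, iter_succ, MonoidHom.comp_assoc]

lemma iter_succ' (φ : G →* G) (n : ℕ) : iter φ (n+1) = (iter φ n).comp φ := by
  have := iter_add φ n 1
  rw [iter_one] at this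
  rw [← this]

/-- The decreasing chain of ranges of iterates. -/
noncomputable def Hn (φ : G →* G) (n : ℕ) : Subgroup G := (iter φ n).range

lemma Hn_zero (φ : G →* G) : Hn φ 0 = ⊤ := by
  ext x; simp [Hn, iter_zero]

lemma Hn_succ (φ : G →* G) (n : ℕ) : Hn φ (n+1) = (Hn φ n).map φ := by
  rw [Hn, iter_succ, MonoidHom.range_comp]; rfl

lemma Hn_one (φ : G →* G) : Hn φ 1 = φ.range := by rw [Hn, iter_one]

lemma Hn_add (φ : G →* G) (n m : ℕ) : Hn φ (n + m) = (Hn φ m).map (iter φ n) := by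
  rw [Hn, iter_add, MonoidHom.range_comp]; rfl

lemma Hn_succ_le (φ : G →* G) (n : ℕ) : Hn φ (n+1) ≤ Hn φ n := by
  induction n with
  | zero => rw [Hn_zero]; exact le_top
  | succ k ih =>
      calc Hn φ (k+2) = (Hn φ (k+1)).map φ := Hn_succ _ _
        _ ≤ (Hn φ k).map φ := Subgroup.map_mono ih
        _ = Hn φ (k+1) := (Hn_succ _ _).symm

lemma Hn_antitone (φ : G →* G) : Antitone (Hn φ) :=
  antitone_nat_of_succ_le (fun n => Hn_succ_le φ n)

lemma Hn_index_ne_zero (φ : G →* G) (hj : φ.range.index ≠ 0) (n : ℕ) :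
    (Hn φ n).index ≠ 0 := by
  induction n with
  | zero => rw [Hn_zero, Subgroup.index_top]; exact one_ne_zero
  | succ k ih =>
      rw [Hn_succ, Subgroup.index_map]
      exact Nat.mul_ne_zero
        (fun h0 => ih (Nat.eq_zero_of_zero_dvd (h0 ▸ Subgroup.index_dvd_of_le le_sup_left)))
        hj

end HirshonAux

namespace HirshonAux

variable {G : Type*} [Group G]

lemma relindex_map_le (φ : G →* G) {A B : Subgroup G} (hAB : A ≤ B)
    (hfin : A.relIndex B ≠ 0) :
    (A.map φ).relIndex (B.map φ) ≤ A.relIndex B := by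
  rw [Subgroup.relIndex, Subgroup.relIndex, Subgroup.index_eq_card, Subgroup.index_eq_card]
  haveI : Finite (↥B ⧸ A.subgroupOf B) := by
    apply Nat.finite_of_card_ne_zero
    rwa [← Subgroup.index_eq_card, ← Subgroup.relIndex]
  refine Nat.card_le_card_of_surjective
    (f := fun (x : ↥B ⧸ A.subgroupOf B) => ?_) ?_
  · refine Quotient.map'
      (fun (b : ↥B) => (⟨φ b, Subgroup.mem_map_of_mem φ b.2⟩ : ↥(B.map φ))) ?_ x
    intro x y hxy
    rw [QuotientGroup.leftRel_apply] at hxy ⊢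
    rw [Subgroup.mem_subgroupOf] at hxy ⊢
    simpa using Subgroup.mem_map_of_mem φ hxy
  · intro q
    refine Quotient.inductionOn' q ?_
    rintro ⟨x, hx⟩
    obtain ⟨b, hb, rfl⟩ := hx
    exact ⟨Quotient.mk'' ⟨b, hb⟩, rfl⟩

/-- relative index of consecutive terms of the chain -/
noncomputable def cseq (φ : G →* G) (n : ℕ) : ℕ := (Hn φ (n+1)).relIndex (Hn φ n)

lemma cseq_mul (φ : G →* G) (n : ℕ) :
    cseq φ n * (Hn φ n).index = (Hn φ (n+1)).index :=
  Subgroup.relIndex_mul_index (Hn_succ_le φ n)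

lemma cseq_ne_zero (φ : G →* G) (hj : φ.range.index ≠ 0) (n : ℕ) : cseq φ n ≠ 0 := by
  intro h0
  have := cseq_mul φ n
  rw [h0, Nat.zero_mul] at this
  exact Hn_index_ne_zero φ hj (n+1) this.symm

lemma cseq_antitone (φ : G →* G) (hj : φ.range.index ≠ 0) : Antitone (cseq φ) := by
  apply antitone_nat_of_succ_le
  intro n
  have h1 : Hn φ (n+2) = (Hn φ (n+1)).map φ := Hn_succ φ (n+1)
  have h2 : Hn φ (n+1) = (Hn φ n).map φ := Hn_succ φ n
  calc cseq φ (n+1) = ((Hn φ (n+1)).map φ).relIndex ((Hn φ n).map φ) := by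
        rw [cseq, h1, ← h2]
    _ ≤ cseq φ n := relindex_map_le φ (Hn_succ_le φ n) (cseq_ne_zero φ hj n)

lemma cseq_eventually_const (φ : G →* G) (hj : φ.range.index ≠ 0) :
    ∃ n₀, ∀ n, n₀ ≤ n → cseq φ n = cseq φ n₀ := by
  have hne : (Set.range (cseq φ)).Nonempty := ⟨cseq φ 0, 0, rfl⟩
  obtain ⟨n₀, hn₀⟩ := Nat.sInf_mem hne
  refine ⟨n₀, fun n hn => le_antisymm (hn₀ ▸ cseq_antitone φ hj hn) ?_⟩
  rw [hn₀]; exact Nat.sInf_le ⟨n, rfl⟩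

lemma key_calc (φ : G →* G) {F : Type*} [Group F] (π : G →* F) (g : G)
    (hg : φ g = 1) (a b : ℕ) (h : a < b)
    (huv : π.comp (iter φ a) = π.comp (iter φ b)) (hmem : g ∈ Hn φ a) :
    π g = 1 := by
  obtain ⟨x, hx⟩ := hmem
  have h1 : π (iter φ a x) = π (iter φ b x) := DFunLike.congr_fun huv x
  obtain ⟨k, rfl⟩ : ∃ k, b = k + 1 + a := ⟨b - a - 1, by omega⟩
  have h2 : iter φ (k + 1 + a) x = iter φ k (φ g) := by
    rw [iter_add, MonoidHom.comp_apply, hx, iter_succ', MonoidHom.comp_apply]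
  rw [hx] at h1
  rw [h1, h2, hg, map_one, map_one]

/-- Mal'cev-type core: in the stable situation the kernel is trivial. -/
lemma hirshon_stable (hfg : Group.FG G) (hrf : ResiduallyFinite G) (φ : G →* G)
    (hj : φ.range.index ≠ 0)
    (hstab : ∀ n, (Hn φ (n+1)).index = (Hn φ n).index * φ.range.index) :
    ∀ g : G, φ g = 1 → g = 1 := by
  -- the kernel is contained in every Hn
  have ha : ∀ n, (Hn φ n).index ≠ 0 := Hn_index_ne_zero φ hj
  have hker : ∀ n, φ.ker ≤ Hn φ n := by
    intro n
    have him := Subgroup.index_map (Hn φ n) φ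
    rw [← Hn_succ, hstab n] at him
    have hsup : (Hn φ n ⊔ φ.ker).index = (Hn φ n).index :=
      Nat.eq_of_mul_eq_mul_right (Nat.pos_of_ne_zero hj) him.symm
    have hrel := Subgroup.relIndex_mul_index (le_sup_left : Hn φ n ≤ Hn φ n ⊔ φ.ker)
    rw [hsup] at hrel
    have h1 : (Hn φ n).relIndex (Hn φ n ⊔ φ.ker) = 1 := by
      have := ha n
      nlinarith [Nat.pos_of_ne_zero (ha n), hrel]
    exact le_trans le_sup_right (Subgroup.relIndex_eq_one.mp h1)
  intro g hg
  by_contra hgne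
  obtain ⟨F, _, _, π, hπ⟩ := hrf g hgne
  haveI : Finite (G →* F) := finite_monoidHom hfg F
  have hmem : ∀ n, g ∈ Hn φ n := fun n => hker n (by simpa [MonoidHom.mem_ker] using hg)
  obtain ⟨a, b, hab, huv⟩ :=
    Finite.exists_ne_map_eq_of_infinite (fun n : ℕ => π.comp (iter φ n))
  -- wlog a < b
  rcases hab.lt_or_gt with h | h
  · exact absurd (key_calc φ π g hg a b h huv (hmem a)) hπ
  · exact absurd (key_calc φ π g hg b a h huv.symm (hmem b)) hπ

end HirshonAux

namespace HirshonAux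

variable {G : Type*} [Group G]

/-- **Hirshon's theorem**: an endomorphism of a finitely generated, torsion-free,
residually finite group whose image has finite index is injective. -/
theorem hirshon (hfg : Group.FG G) (htf : Monoid.IsTorsionFree G)
    (hrf : ResiduallyFinite G) (φ : G →* G) (h : φ.range.FiniteIndex) :
    Function.Injective φ := by
  haveI : Group.FG G := hfg
  have hj : φ.range.index ≠ 0 := h.index_ne_zero
  obtain ⟨n₀, hn₀⟩ := cseq_eventually_const φ hj
  set H : Subgroup G := Hn φ n₀ with hH
  haveI : H.FiniteIndex := ⟨Hn_index_ne_zero φ hj n₀⟩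
  have hmapsto : ∀ x : G, x ∈ H → φ x ∈ H := by
    intro x hx
    refine Hn_succ_le φ n₀ ?_
    obtain ⟨y, hy⟩ := hx
    exact ⟨y, by rw [iter_succ, MonoidHom.comp_apply, hy]⟩
  set φ' : ↥H →* ↥H := MonoidHom.codRestrict (φ.domRestrict H) H (fun x => hmapsto x x.2)
    with hφ'
  have coe_iter : ∀ (n : ℕ) (y : ↥H), ((iter φ' n y : ↥H) : G) = iter φ n (y : G) := by
    intro n
    induction n with
    | zero => intro y; rfl
    | succ k ih =>
        intro y
        rw [iter_succ, MonoidHom.comp_apply, iter_succ, MonoidHom.comp_apply, ← ih y]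
        rfl
  have range_iter' : ∀ n : ℕ, (iter φ' n).range = (Hn φ (n + n₀)).subgroupOf H := by
    intro n
    ext x
    simp only [MonoidHom.mem_range, Subgroup.mem_subgroupOf]
    constructor
    · rintro ⟨y, rfl⟩
      rw [coe_iter, Hn_add]
      exact Subgroup.mem_map_of_mem _ y.2
    · intro hx
      rw [Hn_add] at hx
      obtain ⟨g, hg, hgx⟩ := hx
      exact ⟨⟨g, hg⟩, Subtype.ext (by rw [coe_iter]; exact hgx)⟩
  have hr : ∀ n : ℕ, (Hn φ' n).index = (Hn φ (n + n₀)).relIndex H := by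
    intro n
    rw [Hn, range_iter']
    rfl
  have hrange1 : φ'.range.index = cseq φ n₀ := by
    have : φ'.range = (iter φ' 1).range := by rw [iter_one]
    rw [this, ← Hn]
    rw [hr 1]
    have h10 : 1 + n₀ = n₀ + 1 := by omega
    rw [h10]
    rfl
  have hj' : φ'.range.index ≠ 0 := by rw [hrange1]; exact cseq_ne_zero φ hj n₀
  have hstab : ∀ n, (Hn φ' (n+1)).index = (Hn φ' n).index * φ'.range.index := by
    intro n
    rw [hr, hr, hrange1]
    have e1 : n + 1 + n₀ = (n + n₀) + 1 := by omega
    rw [e1]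
    have := Subgroup.relIndex_mul_relIndex (Hn φ ((n + n₀) + 1)) (Hn φ (n + n₀)) H
      (Hn_succ_le φ (n + n₀)) (Hn_antitone φ (Nat.le_add_left n₀ n))
    rw [← this]
    have : (Hn φ ((n + n₀) + 1)).relIndex (Hn φ (n + n₀)) = cseq φ n₀ :=
      hn₀ (n + n₀) (Nat.le_add_left n₀ n)
    rw [this, Nat.mul_comm]
  have hfg' : Group.FG ↥H := inferInstance
  have hrf' : ResiduallyFinite ↥H := by
    intro x hx
    have hxG : (x : G) ≠ 1 := by
      intro h1
      exact hx (Subtype.ext h1)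
    obtain ⟨F, iF, fF, π, hπ⟩ := hrf (x : G) hxG
    exact ⟨F, iF, fF, π.comp H.subtype, hπ⟩
  have htriv := hirshon_stable hfg' hrf' φ' hj' hstab
  rw [injective_iff_map_eq_one]
  intro g hg
  by_contra hne
  have key : ∀ a b : ℕ, a < b → ((g ^ a : G) : G ⧸ H) = ((g ^ b : G) : G ⧸ H) → False := by
    intro a b hab hq
    have hm : g ^ (b - a) ∈ H := by
      have h2 := QuotientGroup.eq.mp hq
      have h3 : (g ^ a)⁻¹ * g ^ b = g ^ (b - a) := by
        obtain ⟨d, rfl⟩ : ∃ d, b = a + d := ⟨b - a, by omega⟩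
        rw [pow_add, inv_mul_cancel_left, Nat.add_sub_cancel_left]
      rwa [h3] at h2
    have hy : φ' ⟨g ^ (b - a), hm⟩ = 1 := by
      apply Subtype.ext
      show φ (g ^ (b - a)) = 1
      rw [map_pow, hg, one_pow]
    have := htriv _ hy
    have hpow : g ^ (b - a) = 1 := congrArg Subtype.val this
    have hfo : IsOfFinOrder g := isOfFinOrder_iff_pow_eq_one.mpr ⟨b - a, by omega, hpow⟩
    exact htf g hne hfo
  obtain ⟨a, b, hab, hq⟩ :=
    Finite.exists_ne_map_eq_of_infinite (fun n : ℕ => ((g ^ n : G) : G ⧸ H))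
  rcases hab.lt_or_gt with hlt | hlt
  · exact key a b hlt hq
  · exact key b a hlt hq.symm

end HirshonAux

namespace MT

variable {K : Type*} [Group K] (θ : MulAut K)

lemma mult_int_eq_one_of_finOrder {x : Multiplicative ℤ} (h : IsOfFinOrder x) : x = 1 := by
  obtain ⟨n, hn, hxn⟩ := isOfFinOrder_iff_pow_eq_one.mp h
  have h0 : (n : ℤ) • (Multiplicative.toAdd x) = 0 := by
    have := congrArg Multiplicative.toAdd hxn
    simpa using this
  have : Multiplicative.toAdd x = 0 := by
    rcases smul_eq_zero.mp h0 with h | h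
    · exact absurd (Int.natCast_eq_zero.mp h) (by omega)
    · exact h
  calc x = Multiplicative.ofAdd (Multiplicative.toAdd x) := rfl
    _ = 1 := by rw [this]; rfl

lemma torsionFree (htf : Monoid.IsTorsionFree K) :
    Monoid.IsTorsionFree (MappingTorus K θ) := by
  intro g hg hfo
  have hright : g.right = 1 := by
    have : IsOfFinOrder (rightHom g) := rightHom.isOfFinOrder hfo
    simpa [rightHom_eq_right] using mult_int_eq_one_of_finOrder this
  have hgleft : g = inl g.left := by
    conv_lhs => rw [← inl_left_mul_inr_right g]
    rw [hright, map_one, mul_one]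
  have hknet : g.left ≠ 1 := by
    intro h1
    exact hg (by rw [hgleft, h1, map_one])
  obtain ⟨n, hn, hgn⟩ := isOfFinOrder_iff_pow_eq_one.mp hfo
  have : (inl (g.left ^ n) : MappingTorus K θ) = inl 1 := by
    rw [map_pow, map_one, ← hgleft, hgn]
  have hkn : g.left ^ n = 1 := inl_injective this
  exact htf g.left hknet (isOfFinOrder_iff_pow_eq_one.mpr ⟨n, hn, hkn⟩)

lemma ofAdd_one_zpow (z : ℤ) :
    (Multiplicative.ofAdd (1 : ℤ)) ^ z = Multiplicative.ofAdd z := by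
  apply Multiplicative.toAdd.injective
  simp

lemma fg (hfg : Group.FG K) : Group.FG (MappingTorus K θ) := by
  obtain ⟨S, hS, hSfin⟩ := Group.fg_iff.mp hfg
  rw [Group.fg_iff]
  refine ⟨(inl '' S) ∪ {inr (Multiplicative.ofAdd (1 : ℤ))}, ?_, ?_⟩
  · rw [eq_top_iff]
    intro x _
    rw [← inl_left_mul_inr_right x]
    refine Subgroup.mul_mem _ ?_ ?_
    · have h1 : (inl x.left : MappingTorus K θ) ∈ (Subgroup.closure S).map inl := by
        rw [hS]
        exact Subgroup.mem_map_of_mem _ (Subgroup.mem_top _)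
      rw [MonoidHom.map_closure] at h1
      exact Subgroup.closure_mono Set.subset_union_left h1
    · have h1 : (inr (Multiplicative.ofAdd (1:ℤ)) : MappingTorus K θ) ∈
          Subgroup.closure ((inl '' S) ∪ {inr (Multiplicative.ofAdd (1 : ℤ))}) :=
        Subgroup.subset_closure (Set.mem_union_right _ rfl)
      have h2 : (inr x.right : MappingTorus K θ)
          = (inr (Multiplicative.ofAdd (1:ℤ))) ^ (Multiplicative.toAdd x.right) := by
        rw [← map_zpow, ofAdd_one_zpow]
        rfl
      rw [h2]
      exact Subgroup.zpow_mem _ h1 _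
  · exact Set.Finite.union (hSfin.image _) (Set.finite_singleton _)

end MT

namespace MT

variable {K : Type*} [Group K]

/-- The intersection of kernels of all homomorphisms to a fixed group `T`. -/
noncomputable def charN (K : Type*) [Group K] (T : Type*) [Group T] : Subgroup K :=
  ⨅ (q : K →* T), q.ker

lemma mem_charN {T : Type*} [Group T] (x : K) :
    x ∈ charN K T ↔ ∀ q : K →* T, q x = 1 := by
  simp [charN, Subgroup.mem_iInf, MonoidHom.mem_ker]

instance charN_normal (T : Type*) [Group T] : (charN K T).Normal := by
  constructor
  intro n hn g
  rw [mem_charN] at hn ⊢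
  intro q
  simp [map_mul, hn q]

lemma charN_comap_aut {T : Type*} [Group T] (σ : MulAut K) :
    (charN K T).comap σ.toMonoidHom = charN K T := by
  ext x
  rw [Subgroup.mem_comap]
  rw [mem_charN, mem_charN]
  constructor
  · intro h q
    have h1 := h (q.comp σ.symm.toMonoidHom)
    simpa using h1
  · intro h q
    have h1 := h (q.comp σ.toMonoidHom)
    simpa using h1

lemma charN_mem_iff_aut {T : Type*} [Group T] (σ : MulAut K) (x : K) :
    σ x ∈ charN K T ↔ x ∈ charN K T := by
  conv_rhs => rw [← charN_comap_aut (T := T) σ]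
  rfl

lemma charN_finiteIndex (hfg : Group.FG K) (T : Type*) [Group T] [Finite T] :
    (charN K T).FiniteIndex := by
  haveI := HirshonAux.finite_monoidHom hfg T
  exact Subgroup.finiteIndex_iInf (fun q => inferInstance)

lemma charN_le_of_quotient (N : Subgroup K) :
    charN K (Equiv.Perm (K ⧸ N)) ≤ N :=
  (iInf_le _ (MulAction.toPermHom K (K ⧸ N))).trans
    (by rw [← Subgroup.normalCore_eq_ker]; exact Subgroup.normalCore_le N)

end MT

namespace MT

variable {K : Type*} [Group K]

/-- The automorphism of the quotient induced by an automorphism preserving `N`. -/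
noncomputable def quotAut (N : Subgroup K) [N.Normal] (θ : MulAut K)
    (h : ∀ x, θ x ∈ N ↔ x ∈ N) : MulAut (K ⧸ N) where
  toFun := QuotientGroup.map N N θ.toMonoidHom (fun x hx => Subgroup.mem_comap.mpr ((h x).mpr hx))
  invFun := QuotientGroup.map N N θ.symm.toMonoidHom
    (fun x hx => Subgroup.mem_comap.mpr <| by
      show θ.symm x ∈ N
      have h2 := h (θ.symm x)
      rw [θ.apply_symm_apply] at h2
      exact h2.mp hx)
  left_inv := by
    intro q
    induction q using QuotientGroup.induction_on with
    | H x => rw [QuotientGroup.map_mk, QuotientGroup.map_mk]; simp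
  right_inv := by
    intro q
    induction q using QuotientGroup.induction_on with
    | H x => rw [QuotientGroup.map_mk, QuotientGroup.map_mk]; simp
  map_mul' := map_mul _

lemma quotAut_mk (N : Subgroup K) [N.Normal] (θ : MulAut K)
    (h : ∀ x, θ x ∈ N ↔ x ∈ N) (k : K) :
    quotAut N θ h ((k : K ⧸ N)) = ((θ k : K) : K ⧸ N) := rfl

lemma quotAut_inv_mk (N : Subgroup K) [N.Normal] (θ : MulAut K)
    (h : ∀ x, θ x ∈ N ↔ x ∈ N) (k : K) :
    (quotAut N θ h)⁻¹ ((k : K ⧸ N)) = ((θ⁻¹ k : K) : K ⧸ N) := rfl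

lemma quotAut_zpow (N : Subgroup K) [N.Normal] (θ : MulAut K)
    (h : ∀ x, θ x ∈ N ↔ x ∈ N) (z : ℤ) (k : K) :
    ((quotAut N θ h) ^ z) ((k : K ⧸ N)) = (((θ ^ z) k : K) : K ⧸ N) := by
  induction z using Int.induction_on generalizing k with
  | zero => simp
  | succ i ih =>
      rw [zpow_add_one, zpow_add_one, MulAut.mul_apply, MulAut.mul_apply,
        quotAut_mk, ih (θ k)]
  | pred i ih =>
      rw [zpow_sub_one, zpow_sub_one, MulAut.mul_apply, MulAut.mul_apply,
        quotAut_inv_mk, ih (θ⁻¹ k)]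

end MT

namespace MT

variable {K : Type*} [Group K]

lemma shrink {Γ : Type*} [Group Γ] (g : Γ) {Γ₃ : Type*} [Group Γ₃] [Finite Γ₃]
    (Ψ : Γ →* Γ₃) (h : Ψ g ≠ 1) :
    ∃ (H : Type) (_ : Group H) (_ : Finite H) (f : Γ →* H), f g ≠ 1 := by
  obtain ⟨H, iH, ftH, ⟨e⟩⟩ := Finite.exists_type_univ_nonempty_mulEquiv.{_, 0} Γ₃
  refine ⟨H, iH, @Finite.of_fintype H ftH, MonoidHom.comp (MulEquiv.toMonoidHom e) Ψ, ?_⟩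
  intro h1
  apply h
  apply e.injective
  rw [map_one]
  exact h1

theorem residuallyFinite (hfg : Group.FG K) (hrf : ResiduallyFinite K) (θ : MulAut K) :
    ResiduallyFinite (MappingTorus K θ) := by
  intro g hg
  by_cases hz : g.right = 1
  · -- `g` is essentially in `K`
    have hk : g.left ≠ 1 := by
      intro h1
      apply hg
      rw [← inl_left_mul_inr_right g, hz, h1, map_one, map_one, mul_one]
    obtain ⟨H0, iH0, fH0, f, hf⟩ := hrf g.left hk
    letI := iH0
    letI := fH0
    haveI : Finite (K ⧸ f.ker) := Subgroup.finite_quotient_of_finiteIndex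
    set T := Equiv.Perm (K ⧸ f.ker) with hT
    set N := charN K T with hNdef
    haveI : N.Normal := charN_normal T
    haveI : N.FiniteIndex := charN_finiteIndex hfg T
    haveI : Finite (K ⧸ N) := Subgroup.finite_quotient_of_finiteIndex
    set θb : MulAut (K ⧸ N) := quotAut N θ (fun x => charN_mem_iff_aut θ x) with hθb
    haveI : Finite (MulAut (K ⧸ N)) :=
      Finite.of_injective (fun (σ : MulAut (K ⧸ N)) => (σ : (K ⧸ N) → (K ⧸ N)))
        (fun a b hab => by ext q; exact congrFun hab q)
    set m := orderOf θb with hmdef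
    have hmpos : 0 < m := (isOfFinOrder_of_finite θb).orderOf_pos
    have hmone : θb ^ m = 1 := pow_orderOf_eq_one θb
    have hcompat : ∀ t : Multiplicative ℤ,
        (QuotientGroup.mk' N).comp ((zpowersHom (MulAut K) θ t)).toMonoidHom
          = ((zpowersHom (MulAut (K ⧸ N)) θb) ((MonoidHom.id (Multiplicative ℤ)) t)).toMonoidHom.comp
            (QuotientGroup.mk' N) := by
      intro t
      ext k
      show ((((θ ^ (Multiplicative.toAdd t)) k : K)) : K ⧸ N)
          = (θb ^ (Multiplicative.toAdd t)) ((k : K) : K ⧸ N)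
      rw [quotAut_zpow]
    set Φ := SemidirectProduct.map (QuotientGroup.mk' N) (MonoidHom.id (Multiplicative ℤ))
      hcompat with hΦ
    set ζ : (K ⧸ N) ⋊[zpowersHom (MulAut (K ⧸ N)) θb] Multiplicative ℤ :=
      inr (Multiplicative.ofAdd (m : ℤ)) with hζdef
    have hcent : ∀ x : (K ⧸ N) ⋊[zpowersHom (MulAut (K ⧸ N)) θb] Multiplicative ℤ,
        x * ζ = ζ * x := by
      intro x
      ext
      · rw [mul_left, mul_left, hζdef, left_inr, right_inr, map_one, mul_one,
          zpowersHom_apply, toAdd_ofAdd, zpow_natCast, hmone]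
        simp
      · rw [mul_right, mul_right]
        exact mul_comm x.right ζ.right
    set Z := Subgroup.zpowers ζ with hZdef
    haveI hZnormal : Z.Normal := by
      constructor
      rintro n hn x
      obtain ⟨j, rfl⟩ := Subgroup.mem_zpowers_iff.mp hn
      have hc : Commute x ζ := hcent x
      rw [(hc.zpow_right j).eq, mul_assoc, mul_inv_cancel, mul_one]
      exact Subgroup.zpow_mem _ (Subgroup.mem_zpowers ζ) j
    haveI hfinq : Finite (((K ⧸ N) ⋊[zpowersHom (MulAut (K ⧸ N)) θb] Multiplicative ℤ) ⧸ Z) := by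
      apply Finite.of_surjective (f := fun p : (K ⧸ N) × Fin m =>
        ((inl p.1 * inr (Multiplicative.ofAdd ((p.2 : ℕ) : ℤ)) :
          (K ⧸ N) ⋊[zpowersHom (MulAut (K ⧸ N)) θb] Multiplicative ℤ) :
          ((K ⧸ N) ⋊[zpowersHom (MulAut (K ⧸ N)) θb] Multiplicative ℤ) ⧸ Z))
      intro y
      induction y using QuotientGroup.induction_on with
      | H x =>
        set z := Multiplicative.toAdd x.right with hzdef
        have h0 : 0 ≤ z % m := Int.emod_nonneg z (by exact_mod_cast hmpos.ne')
        have h1 : z % m < m := Int.emod_lt_of_pos z (by exact_mod_cast hmpos)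
        refine ⟨⟨x.left, ⟨(z % m).toNat, by omega⟩⟩, ?_⟩
        rw [QuotientGroup.eq]
        have hcoe : (((z % m).toNat : ℕ) : ℤ) = z % m := Int.toNat_of_nonneg h0
        have hval : ζ ^ (z / m)
            = (inl x.left * inr (Multiplicative.ofAdd (((z % m).toNat : ℕ) : ℤ)))⁻¹
              * (inl x.left * inr x.right) := by
          rw [mul_inv_rev, mul_assoc, inv_mul_cancel_left, ← map_inv, ← map_mul, hζdef,
            ← map_zpow]
          congr 1
          apply Multiplicative.toAdd.injective
          rw [toAdd_mul, toAdd_inv, toAdd_ofAdd,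
            toAdd_zpow, toAdd_ofAdd, hcoe, ← hzdef]
          have := Int.mul_ediv_add_emod z m
          rw [smul_eq_mul, mul_comm]
          omega
        rw [inl_left_mul_inr_right] at hval
        exact Subgroup.mem_zpowers_iff.mpr ⟨z / m, hval⟩
    apply shrink g ((QuotientGroup.mk' Z).comp Φ)
    intro h1
    rw [MonoidHom.comp_apply] at h1
    have hgleft : g = inl g.left := by
      conv_lhs => rw [← inl_left_mul_inr_right g]
      rw [hz, map_one, mul_one]
    rw [hgleft] at h1
    rw [hΦ] at h1
    rw [SemidirectProduct.map_inl] at h1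
    rw [QuotientGroup.mk'_apply, QuotientGroup.eq_one_iff] at h1
    obtain ⟨j, hj⟩ := Subgroup.mem_zpowers_iff.mp h1
    have hr : rightHom (ζ ^ j) = 1 := by
      rw [hj, rightHom_inl]
    rw [map_zpow, hζdef, rightHom_inr] at hr
    have hj0 : j = 0 := by
      have := congrArg Multiplicative.toAdd hr
      rw [toAdd_zpow, toAdd_ofAdd, smul_eq_mul] at this
      simp only [toAdd_one] at this
      have hm0 : (m : ℤ) ≠ 0 := by exact_mod_cast hmpos.ne'
      exact (mul_eq_zero.mp this).resolve_right hm0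
    rw [hj0, zpow_zero] at hj
    have : (QuotientGroup.mk' N) g.left = 1 := inl_injective (by rw [← hj, map_one])
    rw [QuotientGroup.mk'_apply, QuotientGroup.eq_one_iff] at this
    exact hf (by
      have hle : N ≤ f.ker := charN_le_of_quotient f.ker
      have := hle this
      rwa [MonoidHom.mem_ker] at this)
  · -- the `ℤ`-coordinate survives
    set z := Multiplicative.toAdd g.right with hzdef
    have hz0 : z ≠ 0 := by
      intro h0
      apply hz
      have : g.right = Multiplicative.ofAdd z := rfl
      rw [this, h0]
      rfl
    set M := z.natAbs + 1 with hMdef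
    refine ⟨Multiplicative (ZMod M), inferInstance, inferInstance,
      (AddMonoidHom.toMultiplicative (Int.castAddHom (ZMod M))).comp rightHom, ?_⟩
    intro h1
    have h2 : ((z : ℤ) : ZMod M) = 0 := by
      have := congrArg Multiplicative.toAdd h1
      simpa using this
    rw [ZMod.intCast_zmod_eq_zero_iff_dvd] at h2
    have h3 : M ∣ z.natAbs := by
      have := Int.natAbs_dvd_natAbs.mpr h2
      simpa using this
    have := Nat.le_of_dvd (by omega) h3
    omega

end MT


/-- If K is finitely generated, torsion-free and residually finite, then every
endomorphism of Γ_θ = K ⋊_θ ℤ whose image has finite index is injective. -/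
theorem stmt7 {K : Type*} [Group K] (hfg : Group.FG K)
    (htf : Monoid.IsTorsionFree K) (hrf : ResiduallyFinite K) (θ : MulAut K)
    (φ : MappingTorus K θ →* MappingTorus K θ) (h : φ.range.FiniteIndex) :
    Function.Injective φ := by
  exact HirshonAux.hirshon (MT.fg θ hfg) (MT.torsionFree θ htf)
    (MT.residuallyFinite hfg hrf θ) φ h
end

section
/- Let θ : K → K be an automorphism of a group K such that θᵐ is an inner automorphism, realized by conjugation by β ∈ K, for some m > 0. Then the map φ : K ⋊_θ ℤ → K ⋊_θ ℤ fixing K pointwise and sending t to β·t^{m+1} is a well-defined injective endomorphism whose image has index m+1. In particular, Γ_θ is not finitely co-Hopfian when m ≥ 1. -/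
open SemidirectProduct

section Aux

variable {K : Type*} [Group K] (θ : MulAut K) (m : ℕ) (β : K)

noncomputable def xelt : K ⋊[zpowersHom (MulAut K) θ] Multiplicative ℤ :=
  inl β * inr (Multiplicative.ofAdd ((m:ℤ)+1))

lemma conj_xelt (hinner : ∀ α : K, (θ ^ m) α = β⁻¹ * α * β) (α : K) :
    xelt θ m β * inl α * (xelt θ m β)⁻¹ = inl (θ α) := by
  have h1 : (zpowersHom (MulAut K) θ (Multiplicative.ofAdd ((m:ℤ)+1))) α
      = β⁻¹ * θ α * β := by
    have h2 : (zpowersHom (MulAut K) θ (Multiplicative.ofAdd ((m:ℤ)+1)))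
        = θ ^ (m:ℤ) * θ := by
      rw [zpowersHom_apply, toAdd_ofAdd, zpow_add, zpow_one]
    rw [h2]
    show (θ ^ (m:ℤ)) (θ α) = _
    rw [zpow_natCast]
    exact hinner (θ α)
  have h3 := inl_aut (φ := zpowersHom (MulAut K) θ) (Multiplicative.ofAdd ((m:ℤ)+1)) α
  rw [h1] at h3
  rw [xelt, mul_inv_rev,
    show (inl β * inr (Multiplicative.ofAdd ((m:ℤ)+1))) * inl α *
        ((inr (Multiplicative.ofAdd ((m:ℤ)+1)))⁻¹ * (inl β)⁻¹)
      = inl β * (inr (Multiplicative.ofAdd ((m:ℤ)+1)) * inl α *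
          inr (Multiplicative.ofAdd ((m:ℤ)+1))⁻¹) * (inl β)⁻¹ by
      rw [map_inv]; group]
  rw [← h3, ← map_inv, ← map_mul, ← map_mul]
  congr 1
  group

end Aux

section Aux2

variable {K : Type*} [Group K] (θ : MulAut K) (m : ℕ) (β : K)

lemma conj_xelt_zpow (hinner : ∀ α : K, (θ ^ m) α = β⁻¹ * α * β) (k : ℤ) :
    ∀ α : K, xelt θ m β ^ k * inl α * (xelt θ m β ^ k)⁻¹ = inl ((θ ^ k) α) := by
  induction k using Int.induction_on with
  | zero => intro α; simp
  | succ k ih =>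
    intro α
    have e : xelt θ m β ^ ((k:ℤ)+1) = xelt θ m β ^ (k:ℤ) * xelt θ m β := by
      rw [zpow_add, zpow_one]
    have e2 : (θ ^ ((k:ℤ)+1)) α = (θ ^ (k:ℤ)) (θ α) := by
      rw [zpow_add, zpow_one]; rfl
    rw [e, e2, ← ih (θ α), ← conj_xelt θ m β hinner α]; group
  | pred k ih =>
    intro α
    have e : xelt θ m β ^ (-(k:ℤ)-1) = xelt θ m β ^ (-(k:ℤ)) * (xelt θ m β)⁻¹ := by
      rw [sub_eq_add_neg, zpow_add, zpow_neg_one]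
    have hinv : (xelt θ m β)⁻¹ * inl α * xelt θ m β = inl (θ⁻¹ α) := by
      have h := conj_xelt θ m β hinner (θ⁻¹ α)
      rw [MulAut.apply_inv_self] at h
      rw [← h]; group
    have e2 : (θ ^ (-(k:ℤ)-1)) α = (θ ^ (-(k:ℤ))) (θ⁻¹ α) := by
      rw [sub_eq_add_neg, zpow_add, zpow_neg_one]; rfl
    rw [e, e2, ← ih (θ⁻¹ α), ← hinv]; group

lemma lift_cond (hinner : ∀ α : K, (θ ^ m) α = β⁻¹ * α * β) :
    ∀ g : Multiplicative ℤ,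
      (inl : K →* K ⋊[zpowersHom (MulAut K) θ] Multiplicative ℤ).comp
          ((zpowersHom (MulAut K) θ g).toMonoidHom)
        = (MulAut.conj (zpowersHom _ (xelt θ m β) g)).toMonoidHom.comp inl := by
  intro g
  apply MonoidHom.ext
  intro α
  show (inl ((zpowersHom (MulAut K) θ g) α) : K ⋊[zpowersHom (MulAut K) θ] Multiplicative ℤ)
    = MulAut.conj ((zpowersHom _ (xelt θ m β)) g) (inl α)
  rw [MulAut.conj_apply, zpowersHom_apply, zpowersHom_apply,
    conj_xelt_zpow θ m β hinner (Multiplicative.toAdd g) α]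

lemma zpowers_ofAdd (a : ℤ) :
    Subgroup.zpowers (Multiplicative.ofAdd a)
      = AddSubgroup.toSubgroup (AddSubgroup.zmultiples a) := by
  ext x
  rw [Subgroup.mem_zpowers_iff]
  show _ ↔ Multiplicative.toAdd x ∈ AddSubgroup.zmultiples a
  rw [AddSubgroup.mem_zmultiples_iff]
  constructor
  · rintro ⟨k, rfl⟩; exact ⟨k, by simp [toAdd_zpow]⟩
  · rintro ⟨k, hk⟩
    refine ⟨k, ?_⟩
    rw [← ofAdd_toAdd x, ← hk, ofAdd_zsmul]

end Aux2

open SemidirectProduct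

/-- If θ^m is inner (conjugation by β) for some m > 0, then the map fixing K and
sending t to β·t^{m+1} is a well-defined injective endomorphism of Γ_θ with image of
index m+1; in particular Γ_θ is not finitely co-Hopfian. -/
theorem stmt9 {K : Type*} [Group K] (θ : MulAut K) (m : ℕ) (hm : 0 < m) (β : K)
    (hinner : ∀ α : K, (θ ^ m) α = β⁻¹ * α * β) :
    ∃ φ : MappingTorus K θ →* MappingTorus K θ,
      (∀ α : K, φ (inl α) = inl α) ∧
      φ (inr (Multiplicative.ofAdd 1)) =
        inl β * (inr (Multiplicative.ofAdd 1) : MappingTorus K θ) ^ (m + 1) ∧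
      Function.Injective φ ∧
      φ.range.index = m + 1 ∧
      ¬ (∀ ψ : MappingTorus K θ →* MappingTorus K θ,
          Function.Injective ψ → ψ.range.FiniteIndex → Function.Bijective ψ) := by
  set x : MappingTorus K θ := xelt θ m β with hx
  set φ : MappingTorus K θ →* MappingTorus K θ :=
    lift inl (zpowersHom _ x) (lift_cond θ m β hinner) with hφ
  have hK : ∀ α : K, φ (inl α) = inl α := fun α => lift_inl _ _ _ α
  have hinrn : ∀ n : Multiplicative ℤ, φ (inr n) = x ^ (Multiplicative.toAdd n) := by
    intro n
    simp [hφ, lift]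
  have ht : φ (inr (Multiplicative.ofAdd 1)) =
      inl β * (inr (Multiplicative.ofAdd 1) : MappingTorus K θ) ^ (m + 1) := by
    rw [hinrn, toAdd_ofAdd, zpow_one, hx, xelt, ← map_pow, ← ofAdd_nsmul]
    norm_num
  have hrx : rightHom x = Multiplicative.ofAdd ((m:ℤ)+1) := by
    rw [hx, xelt]; simp
  have hr : ∀ γ : MappingTorus K θ,
      rightHom (φ γ) = (Multiplicative.ofAdd ((m:ℤ)+1)) ^ (Multiplicative.toAdd (rightHom γ)) := by
    intro γ
    conv_lhs => rw [← inl_left_mul_inr_right γ]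
    rw [map_mul, map_mul, hK, hinrn, rightHom_inl, one_mul, map_zpow, hrx]
    rfl
  have hinj : Function.Injective φ := by
    rw [injective_iff_map_eq_one]
    intro γ hγ
    have h1 := hr γ
    rw [hγ, map_one] at h1
    have h2 : ((m:ℤ)+1) * Multiplicative.toAdd (rightHom γ) = 0 := by
      have := congrArg Multiplicative.toAdd h1
      simpa [← ofAdd_zsmul, mul_comm] using this.symm
    have h3 : Multiplicative.toAdd (rightHom γ) = 0 := by
      rcases mul_eq_zero.1 h2 with h | h
      · omega
      · exact h
    have h4 : γ.right = 1 := by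
      have : rightHom γ = 1 := by
        have := congrArg Multiplicative.ofAdd h3
        simpa using this
      simpa using this
    have h5 : γ = inl γ.left := by
      conv_lhs => rw [← inl_left_mul_inr_right γ]
      rw [h4, map_one, mul_one]
    rw [h5, hK] at hγ
    rw [h5, inl_injective (by simpa using hγ : (inl γ.left : MappingTorus K θ) = inl 1)]
    simp
  have hrange : φ.range = Subgroup.comap (rightHom : MappingTorus K θ →* Multiplicative ℤ)
      (Subgroup.zpowers (Multiplicative.ofAdd ((m:ℤ)+1))) := by
    apply le_antisymm
    · rintro _ ⟨γ, rfl⟩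
      simp only [Subgroup.mem_comap]
      exact ⟨Multiplicative.toAdd (rightHom γ), (hr γ).symm⟩
    · rintro γ hγ
      simp only [Subgroup.mem_comap, Subgroup.mem_zpowers_iff] at hγ
      obtain ⟨k, hk⟩ := hγ
      set δ : MappingTorus K θ := φ (inr (Multiplicative.ofAdd k)) with hδ
      have hrd : rightHom δ = rightHom γ := by
        rw [hδ, hr, rightHom_inr, toAdd_ofAdd, hk]
      have hker : γ * δ⁻¹ ∈ (inl : K →* MappingTorus K θ).range := by
        rw [range_inl_eq_ker_rightHom, MonoidHom.mem_ker, map_mul, map_inv, hrd,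
          mul_inv_cancel]
      obtain ⟨a, ha⟩ := hker
      have : γ = φ (inl a * inr (Multiplicative.ofAdd k)) := by
        rw [map_mul, hK, hδ] at *
        rw [ha]
        group
      exact ⟨_, this.symm⟩
  have hidx : φ.range.index = m + 1 := by
    rw [hrange, Subgroup.index_comap_of_surjective _ rightHom_surjective,
      zpowers_ofAdd, AddSubgroup.index_toSubgroup, Int.index_zmultiples]
    omega
  refine ⟨φ, hK, ht, hinj, hidx, ?_⟩
  intro h
  have hfi : φ.range.FiniteIndex := ⟨by rw [hidx]; omega⟩
  have hbij := h φ hinj hfi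
  have : φ.range = ⊤ := MonoidHom.range_eq_top_of_surjective φ hbij.2
  rw [this, Subgroup.index_top] at hidx
  omega
end
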